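/- Let F(x₁,x₂) := e^{-Q(x₁,x₂)} where Q(x₁,x₂) = a₁x₁² + a₂x₁x₂ + a₃x₂² is positive definite with a₁ > 0. Then ∫₀^∞ F(x₁, x₂) dx₁ = (√π/(2√a₁)) e^{-m²x₂²/4} (1 - E(a₂x₂/(2√(a₁π)))), where m² = 4a₃ - a₂²/a₁ and E(u) = 2∫₀ᵘ e^{-πω²} dω. -/

import Mathlib

open MeasureTheory Real

/-- The rescaled error function `E(u) = 2∫₀ᵘ e^{-πω²} dω`. -/
noncomputable def rescaledErf (u : ℝ) : ℝ :=
  2 * ∫ ω in (0:ℝ)..u, Real.exp (-Real.pi * ω ^ 2)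

theorem integral_gaussian_halfline (a₁ a₂ a₃ : ℝ) (ha₁ : 0 < a₁)
    (hdisc : 0 < 4 * a₁ * a₃ - a₂ ^ 2) (x₂ : ℝ) :
    ∫ x₁ in Set.Ioi (0:ℝ),
        Real.exp (-(a₁ * x₁ ^ 2 + a₂ * x₁ * x₂ + a₃ * x₂ ^ 2)) =
      Real.sqrt Real.pi / (2 * Real.sqrt a₁) *
        Real.exp (-(Real.sqrt (4 * a₃ - a₂ ^ 2 / a₁)) ^ 2 * x₂ ^ 2 / 4) *
        (1 - rescaledErf (a₂ * x₂ / (2 * Real.sqrt (a₁ * Real.pi)))) := by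
  have hπ := Real.pi_pos
  have ha₁' : a₁ ≠ 0 := ne_of_gt ha₁
  set b : ℝ := a₂ * x₂ / (2 * a₁) with hb
  set C : ℝ := (a₃ - a₂ ^ 2 / (4 * a₁)) * x₂ ^ 2 with hCdef
  -- complete the square
  have hsq : ∀ x : ℝ, -(a₁ * x ^ 2 + a₂ * x * x₂ + a₃ * x₂ ^ 2)
      = -a₁ * (x + b) ^ 2 + (-C) := by
    intro x
    rw [hb, hCdef]
    field_simp
    ring
  have hint : Integrable fun x : ℝ => Real.exp (-a₁ * x ^ 2) :=
    integrable_exp_neg_mul_sq ha₁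
  -- shift
  have hshift : ∫ x in Set.Ioi (0:ℝ), Real.exp (-a₁ * (x + b) ^ 2)
      = ∫ x in Set.Ioi b, Real.exp (-a₁ * x ^ 2) := by
    have h := (measurePreserving_add_right volume b).setIntegral_preimage_emb
      (measurableEmbedding_addRight b) (fun x => Real.exp (-a₁ * x ^ 2)) (Set.Ioi b)
    simpa using h
  -- split
  have hsplit : ∫ x in Set.Ioi b, Real.exp (-a₁ * x ^ 2)
      = (∫ x in Set.Ioi (0:ℝ), Real.exp (-a₁ * x ^ 2))
        - ∫ x in (0:ℝ)..b, Real.exp (-a₁ * x ^ 2) := by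
    have h1 := intervalIntegral.integral_Iic_add_Ioi (b := b) (μ := volume)
      hint.integrableOn hint.integrableOn
    have h2 := intervalIntegral.integral_Iic_add_Ioi (b := (0:ℝ)) (μ := volume)
      hint.integrableOn hint.integrableOn
    have h3 := intervalIntegral.integral_Iic_sub_Iic (a := (0:ℝ)) (b := b) (μ := volume)
      hint.integrableOn hint.integrableOn
    linarith [h1, h2, h3]
  -- substitution in the interval integral
  set c : ℝ := Real.sqrt (a₁ / Real.pi) with hc
  have hcpos : 0 < c := Real.sqrt_pos.mpr (div_pos ha₁ hπ)
  have hcsq : Real.pi * c ^ 2 = a₁ := by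
    rw [hc, Real.sq_sqrt (le_of_lt (div_pos ha₁ hπ))]
    field_simp
  set u : ℝ := a₂ * x₂ / (2 * Real.sqrt (a₁ * Real.pi)) with hu
  have hs : 0 < Real.sqrt (a₁ * Real.pi) := Real.sqrt_pos.mpr (mul_pos ha₁ hπ)
  have hmul : Real.sqrt (a₁ / Real.pi) * Real.sqrt (a₁ * Real.pi) = a₁ := by
    rw [← Real.sqrt_mul (le_of_lt (div_pos ha₁ hπ))]
    rw [show a₁ / Real.pi * (a₁ * Real.pi) = a₁ ^ 2 by field_simp]
    exact Real.sqrt_sq ha₁.le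
  have hcb : c * b = u := by
    have h4 : Real.sqrt (a₁ / Real.pi) = a₁ / Real.sqrt (a₁ * Real.pi) := by
      rw [eq_div_iff hs.ne']; exact hmul
    rw [hc, hb, hu, h4]
    field_simp
  have hsubst : ∫ x in (0:ℝ)..b, Real.exp (-a₁ * x ^ 2)
      = c⁻¹ * ∫ ω in (0:ℝ)..u, Real.exp (-Real.pi * ω ^ 2) := by
    have h := intervalIntegral.integral_comp_mul_left
      (fun ω => Real.exp (-Real.pi * ω ^ 2)) (c := c) (a := (0:ℝ)) (b := b) hcpos.ne'
    simp only [mul_zero, hcb, smul_eq_mul] at h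
    rw [← h]
    congr 1
    ext x
    congr 1
    nlinarith [hcsq]
  -- known value of the half-line gaussian integral
  have hgauss : ∫ x in Set.Ioi (0:ℝ), Real.exp (-a₁ * x ^ 2)
      = Real.sqrt (Real.pi / a₁) / 2 := integral_gaussian_Ioi a₁
  -- rewrite the integrand and pull out the constant
  have hlhs : ∫ x₁ in Set.Ioi (0:ℝ),
      Real.exp (-(a₁ * x₁ ^ 2 + a₂ * x₁ * x₂ + a₃ * x₂ ^ 2))
      = (∫ x in Set.Ioi (0:ℝ), Real.exp (-a₁ * (x + b) ^ 2)) * Real.exp (-C) := by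
    rw [← integral_mul_const]
    congr 1
    ext x
    rw [hsq x, Real.exp_add]
  rw [hlhs, hshift, hsplit, hgauss, hsubst]
  have hm2 : 4 * a₃ - a₂ ^ 2 / a₁ = (4 * a₁ * a₃ - a₂ ^ 2) / a₁ := by field_simp
  have hm : (Real.sqrt (4 * a₃ - a₂ ^ 2 / a₁)) ^ 2 = 4 * a₃ - a₂ ^ 2 / a₁ :=
    Real.sq_sqrt (by rw [hm2]; exact le_of_lt (div_pos hdisc ha₁))
  have hexp : -(Real.sqrt (4 * a₃ - a₂ ^ 2 / a₁)) ^ 2 * x₂ ^ 2 / 4 = -C := by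
    rw [hm, hCdef]; field_simp
  rw [hexp]
  have hcinv : c⁻¹ = Real.sqrt Real.pi / Real.sqrt a₁ := by
    rw [hc, ← Real.sqrt_inv, inv_div, Real.sqrt_div Real.pi_pos.le]
  have h5 : Real.sqrt (Real.pi / a₁) = Real.sqrt Real.pi / Real.sqrt a₁ :=
    Real.sqrt_div Real.pi_pos.le a₁
  simp only [rescaledErf]
  rw [hcinv, h5]
  ring
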